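/- Let $X$ be a vector lattice and $J$ an ideal in $X$ with quotient map $Q : X \to X/J$. For any finite disjoint family $(y_k)_{k=1}^{n}$ in $X/J$ there is a disjoint family $(x_k)_{k=1}^{n}$ in $X$ with $Q x_k = y_k$ for $1 \le k \le n$. -/

import Mathlib

set_option linter.unusedSectionVars false
set_option linter.unusedVariables false

section Aux

variable {X Z : Type*}
    [AddCommGroup X] [Lattice X] [Module ℝ X] [CovariantClass X X (· + ·) (· ≤ ·)]
    [AddCommGroup Z] [Lattice Z] [Module ℝ Z] [CovariantClass Z Z (· + ·) (· ≤ ·)]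

private lemma aux_Qinf (Q : X →ₗ[ℝ] Z) (hQlat : ∀ x y, Q (x ⊔ y) = Q x ⊔ Q y) (a b : X) :
    Q (a ⊓ b) = Q a ⊓ Q b := by
  have h1 : Q (a ⊓ b) + Q (a ⊔ b) = Q a + Q b := by
    rw [← map_add, inf_add_sup, map_add]
  have h2 : Q a ⊓ Q b + (Q a ⊔ Q b) = Q a + Q b := inf_add_sup _ _
  rw [hQlat] at h1
  exact add_right_cancel (h1.trans h2.symm)

private lemma aux_Qpos (Q : X →ₗ[ℝ] Z) (hQlat : ∀ x y, Q (x ⊔ y) = Q x ⊔ Q y) (a : X) :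
    Q a⁺ = (Q a)⁺ := by
  rw [posPart_def, posPart_def, hQlat, map_zero]

/-- subadditivity of inf for nonnegative elements -/
private lemma aux_inf_add {a b c : X} (ha : 0 ≤ a) (hb : 0 ≤ b) (hc : 0 ≤ c) :
    (a + b) ⊓ c ≤ a ⊓ c + b ⊓ c := by
  have : a ⊓ c + b ⊓ c = (a + b) ⊓ (c + b) ⊓ ((a + c) ⊓ (c + c)) := by
    rw [add_inf (b) (c) (a ⊓ c), inf_add (a) (c) b, inf_add (a) (c) c]
  rw [this]
  refine le_inf (le_inf inf_le_left ?_) (le_inf ?_ ?_)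
  · exact inf_le_right.trans (le_add_of_nonneg_right hb)
  · exact inf_le_right.trans (le_add_of_nonneg_left ha)
  · exact inf_le_right.trans (le_add_of_nonneg_right hc)

private lemma aux_abs_sub {a b : X} (ha : 0 ≤ a) (hb : 0 ≤ b) (hab : a ⊓ b = 0) :
    |a - b| = a + b := by
  have hsup : a ⊔ b = a + b := by
    have := inf_add_sup a b
    rwa [hab, zero_add] at this
  have hpos : (a - b)⁺ = a := by
    rw [posPart_def, ← sub_self b, ← sup_sub, hsup, add_sub_cancel_right]
  have hneg : (a - b)⁻ = b := by
    rw [negPart_def, neg_sub, ← sub_self a, ← sup_sub, sup_comm, hsup, add_sub_cancel_left]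
  rw [← posPart_add_negPart (a - b), hpos, hneg]

/-- lifting of nonnegative disjoint families -/
private lemma aux_lift_pos (Q : X →ₗ[ℝ] Z) (hQlat : ∀ x y, Q (x ⊔ y) = Q x ⊔ Q y)
    (hQsurj : Function.Surjective Q) {ι : Type*} [Fintype ι] [DecidableEq ι]
    (y : ι → Z) (hy : ∀ k, 0 ≤ y k) (hd : ∀ j k, j ≠ k → y j ⊓ y k = 0) :
    ∃ x : ι → X, (∀ k, 0 ≤ x k) ∧ (∀ j k, j ≠ k → x j ⊓ x k = 0) ∧ ∀ k, Q (x k) = y k := by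
  choose u hu using fun k => hQsurj (y k)
  set v : ι → X := fun k => (u k)⁺ with hv
  have hv0 : ∀ k, 0 ≤ v k := fun k => posPart_nonneg _
  have hQv : ∀ k, Q (v k) = y k := by
    intro k
    rw [hv, aux_Qpos Q hQlat, hu, posPart_eq_self.2 (hy k)]
  set x : ι → X := fun k => (v k - ∑ j ∈ Finset.univ.erase k, v k ⊓ v j)⁺ with hx
  have hx0 : ∀ k, 0 ≤ x k := fun k => posPart_nonneg _
  have key : ∀ j k, j ≠ k → x k ≤ (v k - v j)⁺ := by
    intro j k hjk
    have hterm : v k ⊓ v j ≤ ∑ j ∈ Finset.univ.erase k, v k ⊓ v j := by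
      classical
      rw [← Finset.add_sum_erase _ _ (Finset.mem_erase.2 ⟨hjk, Finset.mem_univ j⟩)]
      refine le_add_of_nonneg_right ?_
      induction ((Finset.univ.erase k).erase j) using Finset.induction_on with
      | empty => simp
      | insert _ _ hni ih =>
        rw [Finset.sum_insert hni]
        exact add_nonneg (le_inf (hv0 k) (hv0 _)) ih
    have h1 : x k ≤ (v k - v k ⊓ v j)⁺ :=
      posPart_mono (sub_le_sub_left hterm _)
    have h3 : (v k - v k ⊓ v j)⁺ = v k - v k ⊓ v j :=
      posPart_eq_self.2 (sub_nonneg.2 inf_le_left)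
    have h2 : v k - v k ⊓ v j = (v k - v j)⁺ := by
      rw [sub_inf, sub_self, posPart_def, sup_comm]
    exact (h1.trans_eq h3).trans_eq h2
  refine ⟨x, hx0, ?_, ?_⟩
  · intro j k hjk
    have h1 : x j ⊓ x k ≤ (v j - v k)⁺ ⊓ (v k - v j)⁺ :=
      inf_le_inf (key k j hjk.symm) (key j k hjk)
    have h2 : (v k - v j)⁺ = (v j - v k)⁻ := by
      rw [negPart_def, neg_sub, posPart_def]
    rw [h2, posPart_inf_negPart_eq_zero] at h1
    exact le_antisymm h1 (le_inf (hx0 j) (hx0 k))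
  · intro k
    have hsum : Q (∑ j ∈ Finset.univ.erase k, v k ⊓ v j) = 0 := by
      rw [map_sum]
      refine Finset.sum_eq_zero fun j hj => ?_
      rw [aux_Qinf Q hQlat, hQv, hQv]
      exact hd k j (Finset.mem_erase.1 hj).1.symm
    rw [hx, aux_Qpos Q hQlat, map_sub, hsum, sub_zero, hQv, posPart_eq_self.2 (hy k)]

end Aux

/-- finite disjoint families in a quotient `X/J` of a vector lattice
by an ideal lift to disjoint families in `X`.  The quotient map is formalized as a
surjective linear lattice homomorphism `Q : X → Z` (its kernel is then an ideal and
`Z ≅ X / ker Q`). -/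
theorem stmt_17 {X Z : Type*}
    [AddCommGroup X] [Lattice X] [Module ℝ X] [CovariantClass X X (· + ·) (· ≤ ·)]
    [AddCommGroup Z] [Lattice Z] [Module ℝ Z] [CovariantClass Z Z (· + ·) (· ≤ ·)]
    (Q : X →ₗ[ℝ] Z) (hQlat : ∀ x y, Q (x ⊔ y) = Q x ⊔ Q y)
    (hQsurj : Function.Surjective Q)
    (n : ℕ) (y : Fin n → Z) (hdisj : ∀ j k, j ≠ k → |y j| ⊓ |y k| = 0) :
    ∃ x : Fin n → X, (∀ j k, j ≠ k → |x j| ⊓ |x k| = 0) ∧ ∀ k, Q (x k) = y k := by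
  set w : Fin n × Bool → Z := fun p => if p.2 then (y p.1)⁺ else (y p.1)⁻ with hw
  have hw0 : ∀ p, 0 ≤ w p := by
    intro p
    by_cases h : p.2 <;> simp [hw, h, posPart_nonneg, negPart_nonneg]
  have hwabs : ∀ p, w p ≤ |y p.1| := by
    intro p
    by_cases h : p.2 <;> simp only [hw, h, if_true, if_false] <;>
      [exact sup_le (le_abs_self _) (abs_nonneg _);
       exact sup_le (neg_le_abs _) (abs_nonneg _)]
  have hwdisj : ∀ p q, p ≠ q → w p ⊓ w q = 0 := by
    rintro ⟨p1, p2⟩ ⟨q1, q2⟩ hpq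
    rcases eq_or_ne p1 q1 with h1 | h1
    · subst h1
      have h2 : p2 ≠ q2 := fun h => hpq (by rw [h])
      refine le_antisymm ?_ (le_inf (hw0 _) (hw0 _))
      cases p2 <;> cases q2
      · exact absurd rfl h2
      · have : w (p1, false) ⊓ w (p1, true) = (y p1)⁻ ⊓ (y p1)⁺ := by simp [hw]
        rw [this, inf_comm]
        exact (posPart_inf_negPart_eq_zero _).le
      · have : w (p1, true) ⊓ w (p1, false) = (y p1)⁺ ⊓ (y p1)⁻ := by simp [hw]
        rw [this]
        exact (posPart_inf_negPart_eq_zero _).le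
      · exact absurd rfl h2
    · refine le_antisymm ?_ (le_inf (hw0 _) (hw0 _))
      calc w (p1, p2) ⊓ w (q1, q2) ≤ |y p1| ⊓ |y q1| :=
            inf_le_inf (hwabs (p1, p2)) (hwabs (q1, q2))
        _ = 0 := hdisj _ _ h1
  obtain ⟨x', hx'0, hx'disj, hQx'⟩ := aux_lift_pos Q hQlat hQsurj w hw0 hwdisj
  set x : Fin n → X := fun k => x' (k, true) - x' (k, false) with hxdef
  have habs : ∀ k, |x k| = x' (k, true) + x' (k, false) := by
    intro k
    exact aux_abs_sub (hx'0 _) (hx'0 _)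
      (hx'disj (k, true) (k, false) (by simp))
  refine ⟨x, ?_, ?_⟩
  · intro j k hjk
    refine le_antisymm ?_ (le_inf (abs_nonneg _) (abs_nonneg _))
    rw [habs, habs]
    have hne : ∀ b b' : Bool, (j, b) ≠ (k, b') := by
      intro b b' h; exact hjk (congrArg Prod.fst h)
    have h2 : ∀ b : Bool, (x' (j, true) + x' (j, false)) ⊓ x' (k, b) = 0 := by
      intro b
      refine le_antisymm ?_ (le_inf (add_nonneg (hx'0 _) (hx'0 _)) (hx'0 _))
      calc (x' (j, true) + x' (j, false)) ⊓ x' (k, b)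
          ≤ x' (j, true) ⊓ x' (k, b) + x' (j, false) ⊓ x' (k, b) :=
            aux_inf_add (hx'0 _) (hx'0 _) (hx'0 _)
        _ = 0 := by rw [hx'disj _ _ (hne true b), hx'disj _ _ (hne false b), add_zero]
    have h1 : (x' (j, true) + x' (j, false)) ⊓ (x' (k, true) + x' (k, false)) ≤
        (x' (j, true) + x' (j, false)) ⊓ x' (k, true) +
        (x' (j, true) + x' (j, false)) ⊓ x' (k, false) := by
      rw [inf_comm (a := x' (j, true) + x' (j, false))]
      calc (x' (k, true) + x' (k, false)) ⊓ (x' (j, true) + x' (j, false))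
          ≤ x' (k, true) ⊓ (x' (j, true) + x' (j, false)) +
            x' (k, false) ⊓ (x' (j, true) + x' (j, false)) :=
            aux_inf_add (hx'0 _) (hx'0 _) (add_nonneg (hx'0 _) (hx'0 _))
        _ = _ := by rw [inf_comm, inf_comm (a := x' (k, false))]
    exact h1.trans_eq (by rw [h2 true, h2 false, add_zero])
  · intro k
    rw [hxdef]
    simp only [map_sub, hQx', hw]
    simp [posPart_sub_negPart]
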